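/- arXiv:2406.18497 — 8 statements merged into one kernel-verified Lean document; each statement's English description precedes it below -/
import Mathlib

section
/- Let D and E be categories such that D has pushouts and E has pullbacks. Let F, L : D ⥤ E be functors with right adjoints R, U : E ⥤ D respectively (adjunctions F ⊣ R and L ⊣ U), let α : F ⟶ L be a natural transformation, and let α' : U ⟶ R be its conjugate (mate) under these adjunctions. Then for every morphism ℓ : A ⟶ B in D and every morphism e : Y ⟶ X in E, the Leibniz pushout application α▫ℓ : F B ⊔_{F A} L A ⟶ L B has the left lifting property against e if and only if ℓ has the left lifting property against the Leibniz pullback application α'▫e : U Y ⟶ U X ×_{R X} R Y. -/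
open CategoryTheory Limits

private lemma conj_key {D E : Type*} [Category D] [Category E]
    {F L : D ⥤ E} {R U : E ⥤ D} (adj₁ : F ⊣ R) (adj₂ : L ⊣ U) (α : F ⟶ L)
    {d : D} {y : E} (g : L.obj d ⟶ y) :
    adj₂.homEquiv d y g ≫ (conjugateEquiv adj₂ adj₁ α).app y =
      adj₁.homEquiv d y (α.app d ≫ g) := by
  rw [Adjunction.homEquiv_unit, Adjunction.homEquiv_unit, Category.assoc,
    (conjugateEquiv adj₂ adj₁ α).naturality g, ← Category.assoc,
    unit_conjugateEquiv adj₂ adj₁ α d, Category.assoc, R.map_comp]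

/-- Let `D` have pushouts (in the codomain of `F, L`) and pullbacks (in the
codomain of `R, U`).  Given adjunctions `F ⊣ R` and `L ⊣ U`, a natural transformation
`α : F ⟶ L` and its conjugate (mate) `α' : U ⟶ R`, a morphism `ℓ : A ⟶ B` of `D` and a
morphism `e : Y ⟶ X` of `E`, the Leibniz pushout application
`α▫ℓ : F B ⊔_{F A} L A ⟶ L B` has the left lifting property against `e` if and only if `ℓ`
has the left lifting property against the Leibniz pullback application
`α'▫e : U Y ⟶ U X ×_{R X} R Y`. -/
theorem leibniz_application_transposition
    {D E : Type*} [Category D] [Category E] [HasPushouts E] [HasPullbacks D]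
    {F L : D ⥤ E} {R U : E ⥤ D}
    (adj₁ : F ⊣ R) (adj₂ : L ⊣ U) (α : F ⟶ L)
    {A B : D} (ℓ : A ⟶ B) {Y X : E} (e : Y ⟶ X) :
    HasLiftingProperty
        (pushout.desc (α.app B) (L.map ℓ) (α.naturality ℓ) :
          pushout (F.map ℓ) (α.app A) ⟶ L.obj B) e ↔
      HasLiftingProperty ℓ
        (pullback.lift (U.map e) ((conjugateEquiv adj₂ adj₁ α).app Y)
            ((conjugateEquiv adj₂ adj₁ α).naturality e) :
          U.obj Y ⟶ pullback ((conjugateEquiv adj₂ adj₁ α).app X) (R.map e)) := by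
  set α' := conjugateEquiv adj₂ adj₁ α with hα'
  set q : pushout (F.map ℓ) (α.app A) ⟶ L.obj B :=
    pushout.desc (α.app B) (L.map ℓ) (α.naturality ℓ) with hq
  set r : U.obj Y ⟶ pullback (α'.app X) (R.map e) :=
    pullback.lift (U.map e) (α'.app Y) (α'.naturality e) with hr
  constructor
  · intro h
    constructor
    intro u v sq
    -- transpose the square
    set v₁ : B ⟶ U.obj X := v ≫ pullback.fst _ _ with hv₁
    set v₂ : B ⟶ R.obj Y := v ≫ pullback.snd _ _ with hv₂
    set ub : L.obj A ⟶ Y := (adj₂.homEquiv A Y).symm u with hub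
    set v₁b : L.obj B ⟶ X := (adj₂.homEquiv B X).symm v₁ with hv₁b
    set v₂b : F.obj B ⟶ Y := (adj₁.homEquiv B Y).symm v₂ with hv₂b
    have hw1 : u ≫ U.map e = ℓ ≫ v₁ := by
      have := sq.w =≫ pullback.fst _ _
      simp only [Category.assoc, hr] at this
      erw [pullback.lift_fst] at this
      exact this
    have hw2 : u ≫ α'.app Y = ℓ ≫ v₂ := by
      have := sq.w =≫ pullback.snd _ _
      simp only [Category.assoc, hr] at this
      erw [pullback.lift_snd] at this
      exact this
    have hwp : v₁ ≫ α'.app X = v₂ ≫ R.map e := by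
      simp [hv₁, hv₂, pullback.condition]
    have hdesc : F.map ℓ ≫ v₂b = α.app A ≫ ub := by
      apply (adj₁.homEquiv _ _).injective
      rw [adj₁.homEquiv_naturality_left, ← conj_key adj₁ adj₂ α ub, hub,
        hv₂b, Equiv.apply_symm_apply, Equiv.apply_symm_apply, hw2]
    set top : pushout (F.map ℓ) (α.app A) ⟶ Y := pushout.desc v₂b ub hdesc with htop
    have hsq2 : CommSq top q e v₁b := by
      constructor
      apply pushout.hom_ext
      · apply (adj₁.homEquiv _ _).injective
        rw [← Category.assoc, ← Category.assoc]
        simp only [htop, hq, pushout.inl_desc]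
        rw [adj₁.homEquiv_naturality_right, ← conj_key adj₁ adj₂ α v₁b, hv₁b,
          hv₂b, Equiv.apply_symm_apply, Equiv.apply_symm_apply, hwp]
      · apply (adj₂.homEquiv _ _).injective
        rw [← Category.assoc, ← Category.assoc]
        simp only [htop, hq, pushout.inr_desc]
        rw [adj₂.homEquiv_naturality_right, adj₂.homEquiv_naturality_left, hub,
          hv₁b, Equiv.apply_symm_apply, Equiv.apply_symm_apply, hw1]
    obtain ⟨⟨⟨φ, hfl, hfr⟩⟩⟩ := h.sq_hasLift hsq2
    exact CommSq.HasLift.mk'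
      { l := adj₂.homEquiv B Y φ
        fac_left := by
          rw [← adj₂.homEquiv_naturality_left]
          have : L.map ℓ ≫ φ = ub := by
            have := pushout.inr _ _ ≫= hfl
            erw [pushout.inr_desc_assoc, pushout.inr_desc] at this
            exact this
          rw [this, hub, Equiv.apply_symm_apply]
        fac_right := by
          apply pullback.hom_ext
          · rw [Category.assoc]
            simp only [hr, pullback.lift_fst]
            rw [← adj₂.homEquiv_naturality_right, hfr, hv₁b, Equiv.apply_symm_apply, hv₁]
          · rw [Category.assoc]
            simp only [hr, pullback.lift_snd]
            rw [conj_key adj₁ adj₂ α φ]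
            have : α.app B ≫ φ = v₂b := by
              have := pushout.inl _ _ ≫= hfl
              erw [pushout.inl_desc_assoc, pushout.inl_desc] at this
              exact this
            rw [this, hv₂b, Equiv.apply_symm_apply, hv₂] }
  · intro h
    constructor
    intro u v sq
    set a : F.obj B ⟶ Y := pushout.inl _ _ ≫ u with ha
    set b : L.obj A ⟶ Y := pushout.inr _ _ ≫ u with hb
    set as : B ⟶ R.obj Y := adj₁.homEquiv B Y a with has
    set bs : A ⟶ U.obj Y := adj₂.homEquiv A Y b with hbs
    set vs : B ⟶ U.obj X := adj₂.homEquiv B X v with hvs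
    have h1 : a ≫ e = α.app B ≫ v := by
      have := pushout.inl _ _ ≫= sq.w
      erw [pushout.inl_desc_assoc] at this
      simpa [ha] using this
    have h2 : b ≫ e = L.map ℓ ≫ v := by
      have := pushout.inr _ _ ≫= sq.w
      erw [pushout.inr_desc_assoc] at this
      simpa [hb] using this
    have h3 : F.map ℓ ≫ a = α.app A ≫ b := by
      have := pushout.condition (f := F.map ℓ) (g := α.app A) =≫ u
      simpa [ha, hb] using this
    have hlift : vs ≫ α'.app X = as ≫ R.map e := by
      rw [hvs, conj_key adj₁ adj₂ α v, has, ← adj₁.homEquiv_naturality_right, h1]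
    set w : B ⟶ pullback (α'.app X) (R.map e) := pullback.lift vs as hlift with hw
    have hsq2 : CommSq bs ℓ r w := by
      constructor
      apply pullback.hom_ext
      · rw [Category.assoc, Category.assoc]
        simp only [hr, hw, pullback.lift_fst]
        rw [hbs, ← adj₂.homEquiv_naturality_right, h2, adj₂.homEquiv_naturality_left, hvs]
      · rw [Category.assoc, Category.assoc]
        simp only [hr, hw, pullback.lift_snd]
        rw [hbs, conj_key adj₁ adj₂ α b, ← h3, adj₁.homEquiv_naturality_left, has]
    obtain ⟨⟨⟨ψ, hfl, hfr⟩⟩⟩ := h.sq_hasLift hsq2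
    set φ : L.obj B ⟶ Y := (adj₂.homEquiv B Y).symm ψ with hφ
    exact CommSq.HasLift.mk'
      { l := φ
        fac_left := by
          apply pushout.hom_ext
          · simp only [hq, pushout.inl_desc_assoc]
            apply (adj₁.homEquiv _ _).injective
            rw [← conj_key adj₁ adj₂ α φ, hφ, Equiv.apply_symm_apply]
            have := hfr =≫ pullback.snd _ _
            simp only [Category.assoc, hr, hw, pullback.lift_snd] at this
            rw [this, has, ha]
          · simp only [hq, pushout.inr_desc_assoc]
            apply (adj₂.homEquiv _ _).injective
            rw [adj₂.homEquiv_naturality_left, hφ, Equiv.apply_symm_apply, hfl, hbs, hb]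
        fac_right := by
          apply (adj₂.homEquiv _ _).injective
          rw [adj₂.homEquiv_naturality_right, hφ, Equiv.apply_symm_apply]
          have := hfr =≫ pullback.fst _ _
          simp only [Category.assoc, hr, hw, pullback.lift_fst] at this
          rw [this, hvs] }
end

section
/- Let E be a finitely complete category with a subobject classifier, and let G be a groupoid. Then the functor category G ⥤ E has a subobject classifier, given by the constant functor at the subobject classifier of E together with the constant truth morphism. Moreover, for any functor F : G ⥤ H between groupoids, the restriction functor F* : (H ⥤ E) ⥤ (G ⥤ E) (precomposition with F) sends a subobject classifier of H ⥤ E to a subobject classifier of G ⥤ E. -/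
open CategoryTheory Limits

/-- A morphism `t : T ⟶ Ω` out of a terminal object `T` is a *subobject classifier* if it is a
monomorphism and every monomorphism `m : U ⟶ X` arises as the pullback of `t` along a unique
morphism `χ : X ⟶ Ω`. -/
structure CategoryTheory.IsSubobjectClassifier {C : Type*} [Category C] {T Ω : C}
    (hT : IsTerminal T) (t : T ⟶ Ω) : Prop where
  mono : Mono t
  classifies : ∀ {U X : C} (m : U ⟶ X) [Mono m],
    ∃! χ : X ⟶ Ω, IsPullback m (hT.from U) χ t

section Aux

variable {K : Type*} [Category K] {C : Type*} [Category C]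

/-- A componentwise pullback square of natural transformations is a pullback square in the
functor category. -/
lemma aux_isPullback_of_app {P X Y Z : K ⥤ C} {fst : P ⟶ X} {snd : P ⟶ Y} {f : X ⟶ Z} {g : Y ⟶ Z}
    (h : ∀ k, IsPullback (fst.app k) (snd.app k) (f.app k) (g.app k)) :
    IsPullback fst snd f g := by
  have w : fst ≫ f = snd ≫ g := by ext k; exact (h k).w
  refine IsPullback.of_isLimit (PullbackCone.IsLimit.mk w
    (fun s => ?_) (fun s => ?_) (fun s => ?_) (fun s m hm₁ hm₂ => ?_))
  · exact
      { app := fun k => (h k).lift (s.fst.app k) (s.snd.app k)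
          ((NatTrans.comp_app _ _ _).symm.trans ((congr_app s.condition k).trans (NatTrans.comp_app _ _ _)))
        naturality := fun k k' u => by
          apply (h k').hom_ext
          · simp only [Category.assoc, IsPullback.lift_fst, NatTrans.naturality]
            rw [← Category.assoc, IsPullback.lift_fst]
          · simp only [Category.assoc, IsPullback.lift_snd, NatTrans.naturality]
            rw [← Category.assoc, IsPullback.lift_snd] }
  · ext k; exact (h k).lift_fst _ _ _
  · ext k; exact (h k).lift_snd _ _ _
  · ext k
    apply (h k).hom_ext
    · rw [IsPullback.lift_fst]; exact congr_app hm₁ k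
    · rw [IsPullback.lift_snd]; exact congr_app hm₂ k

/-- A pullback square in a functor category with complete codomain is a componentwise
pullback. -/
lemma aux_isPullback_app [HasPullbacks C] {P X Y Z : K ⥤ C}
    {fst : P ⟶ X} {snd : P ⟶ Y} {f : X ⟶ Z} {g : Y ⟶ Z}
    (h : IsPullback fst snd f g) (k : K) :
    IsPullback (fst.app k) (snd.app k) (f.app k) (g.app k) :=
  h.map ((evaluation K C).obj k)

/-- Subobject classifiers are stable under isomorphism of the classifying arrow. -/
lemma aux_isSubobjectClassifier_of_iso {T Ω T₂ Ω₂ : C}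
    (hT : IsTerminal T) (hT₂ : IsTerminal T₂) {t : T ⟶ Ω} {t₂ : T₂ ⟶ Ω₂}
    (eT : T ≅ T₂) (eΩ : Ω ≅ Ω₂) (comm : t ≫ eΩ.hom = eT.hom ≫ t₂)
    (h : CategoryTheory.IsSubobjectClassifier hT t) :
    CategoryTheory.IsSubobjectClassifier hT₂ t₂ := by
  have ht₂ : t₂ = eT.inv ≫ t ≫ eΩ.hom := by
    rw [comm, ← Category.assoc, eT.inv_hom_id, Category.id_comp]
  have mono₂ : Mono t₂ := by
    rw [ht₂]
    have := h.mono
    infer_instance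
  have isoSq : IsPullback t eT.hom eΩ.hom t₂ :=
    IsPullback.of_vert_isIso ⟨comm⟩
  have isoSq' : IsPullback t₂ eT.inv eΩ.inv t := by
    refine IsPullback.of_vert_isIso ⟨?_⟩
    rw [ht₂]; simp
  refine ⟨mono₂, fun {U X} m _ => ?_⟩
  obtain ⟨χ, hχ, huniq⟩ := h.classifies m
  refine ⟨χ ≫ eΩ.hom, ?_, ?_⟩
  · have := hχ.paste_vert isoSq
    have hfrom : hT.from U ≫ eT.hom = hT₂.from U := hT₂.hom_ext _ _
    rwa [hfrom] at this
  · intro χ' hχ'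
    have := hχ'.paste_vert isoSq'
    have hfrom : hT₂.from U ≫ eT.inv = hT.from U := hT.hom_ext _ _
    rw [hfrom] at this
    have := huniq _ this
    rw [← this]; simp

/-- Subobject classifiers are unique: the classifying arrows are isomorphic. -/
lemma aux_isSubobjectClassifier_unique {T Ω T' Ω' : C}
    (hT : IsTerminal T) (hT' : IsTerminal T') {t : T ⟶ Ω} {t' : T' ⟶ Ω'}
    (h : CategoryTheory.IsSubobjectClassifier hT t)
    (h' : CategoryTheory.IsSubobjectClassifier hT' t') :
    ∃ (eT : T ≅ T') (eΩ : Ω ≅ Ω'), t ≫ eΩ.hom = eT.hom ≫ t' := by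
  have mt := h.mono
  have mt' := h'.mono
  obtain ⟨χ', hχ', _⟩ := h'.classifies t
  obtain ⟨χ, hχ, _⟩ := h.classifies t'
  -- the identity square on t is a pullback
  have idSq : IsPullback t (hT.from T) (𝟙 Ω) t := by
    have : hT.from T = 𝟙 T := hT.hom_ext _ _
    rw [this]
    exact IsPullback.of_vert_isIso ⟨by simp⟩
  have idSq' : IsPullback t' (hT'.from T') (𝟙 Ω') t' := by
    have : hT'.from T' = 𝟙 T' := hT'.hom_ext _ _
    rw [this]
    exact IsPullback.of_vert_isIso ⟨by simp⟩
  obtain ⟨χt, _, huniq⟩ := h.classifies t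
  obtain ⟨χt', _, huniq'⟩ := h'.classifies t'
  have c1 : χ' ≫ χ = 𝟙 Ω := by
    have p1 := hχ'.paste_vert hχ
    have : hT'.from T ≫ hT.from T' = hT.from T := hT.hom_ext _ _
    rw [this] at p1
    rw [huniq _ p1, huniq _ idSq]
  have c2 : χ ≫ χ' = 𝟙 Ω' := by
    have p2 := hχ.paste_vert hχ'
    have : hT.from T' ≫ hT'.from T = hT'.from T' := hT'.hom_ext _ _
    rw [this] at p2
    rw [huniq' _ p2, huniq' _ idSq']
  refine ⟨⟨hT'.from T, hT.from T', hT.hom_ext _ _, hT'.hom_ext _ _⟩,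
    ⟨χ', χ, c1, c2⟩, ?_⟩
  exact hχ'.w

variable (K) in
/-- The constant functor at a terminal object is terminal. -/
noncomputable def aux_constTerminal {T : C} (hT : IsTerminal T) :
    IsTerminal ((Functor.const K).obj T) :=
  IsTerminal.ofUniqueHom
    (fun X => { app := fun k => hT.from _,
                naturality := fun _ _ _ => hT.hom_ext _ _ })
    (fun X m => by ext k; exact hT.hom_ext _ _)

/-- Part 1 of the statement, for an arbitrary groupoid. -/
lemma aux_constClassifier {E : Type*} [Category E] [HasFiniteLimits E]
    {K : Type*} [Groupoid K] {T Ω : E} (hT : IsTerminal T) (t : T ⟶ Ω)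
    (ht : CategoryTheory.IsSubobjectClassifier hT t)
    (hTK : IsTerminal ((Functor.const K).obj T)) :
    CategoryTheory.IsSubobjectClassifier hTK ((Functor.const K).map t) := by
  constructor
  · have := ht.mono
    exact NatTrans.mono_of_mono_app _
  · intro U X m _
    have hm : ∀ k : K, Mono (m.app k) :=
      (NatTrans.mono_iff_mono_app m).mp inferInstance
    -- componentwise classifying maps
    have cls := fun k : K => ht.classifies (m.app k)
    choose χ hχ huniq using cls
    -- naturality of the classifying maps
    have hnat : ∀ {k k' : K} (u : k ⟶ k'), X.map u ≫ χ k' = χ k := by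
      intro k k' u
      have sq : IsPullback (m.app k) (U.map u) (X.map u) (m.app k') :=
        IsPullback.of_vert_isIso ⟨(m.naturality u).symm⟩
      have p := sq.paste_vert (hχ k')
      have : U.map u ≫ hT.from (U.obj k') = hT.from (U.obj k) := hT.hom_ext _ _
      rw [this] at p
      exact huniq k _ p
    refine ⟨{ app := fun k => χ k,
              naturality := fun k k' u => by
                simpa using hnat u }, ?_, ?_⟩
    · apply aux_isPullback_of_app
      intro k
      have : (hTK.from U).app k = hT.from (U.obj k) := hT.hom_ext _ _
      rw [this]
      exact hχ k
    · intro χ' hχ'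
      ext k
      have pk := aux_isPullback_app hχ' k
      have : (hTK.from U).app k = hT.from (U.obj k) := hT.hom_ext _ _
      rw [this] at pk
      exact huniq k _ pk

end Aux

/-- Let `E` be a finitely complete category with a subobject classifier
`t : T ⟶ Ω`, and let `G`, `H` be groupoids.  Then the functor category `G ⥤ E` has a subobject
classifier, given by the constant functor at `Ω` together with the constant truth morphism;
moreover, for any functor `F : G ⥤ H`, restriction along `F` (precomposition) sends any
subobject classifier of `H ⥤ E` to a subobject classifier of `G ⥤ E`. -/
theorem functorCategory_subobjectClassifier
    {E : Type*} [Category E] [HasFiniteLimits E]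
    {G H : Type*} [Groupoid G] [Groupoid H]
    {T Ω : E} (hT : IsTerminal T) (t : T ⟶ Ω)
    (ht : CategoryTheory.IsSubobjectClassifier hT t) (F : G ⥤ H) :
    (∃ hT' : IsTerminal ((Functor.const G).obj T),
        CategoryTheory.IsSubobjectClassifier hT' ((Functor.const G).map t)) ∧
      ∀ {T' Ω' : H ⥤ E} (hT' : IsTerminal T') (t' : T' ⟶ Ω'),
        CategoryTheory.IsSubobjectClassifier hT' t' →
          ∃ hT'' : IsTerminal (F ⋙ T'),
            CategoryTheory.IsSubobjectClassifier hT'' (Functor.whiskerLeft F t') := by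
  have hTG := aux_constTerminal G hT
  have hclsG := aux_constClassifier hT t ht hTG
  refine ⟨⟨hTG, hclsG⟩, ?_⟩
  intro T' Ω' hT' t' h'
  -- the classifier of H ⥤ E from part 1
  have hTH := aux_constTerminal H hT
  have hclsH := aux_constClassifier hT t ht hTH
  -- uniqueness of subobject classifiers in H ⥤ E
  obtain ⟨eT, eΩ, comm⟩ := aux_isSubobjectClassifier_unique hTH hT' hclsH h'
  -- whisker the isomorphisms along F; note F ⋙ const T = const T definitionally
  let eTw : (Functor.const G).obj T ≅ F ⋙ T' := Functor.isoWhiskerLeft F eT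
  let eΩw : (Functor.const G).obj Ω ≅ F ⋙ Ω' := Functor.isoWhiskerLeft F eΩ
  have hT'' : IsTerminal (F ⋙ T') := IsTerminal.ofIso hTG eTw
  refine ⟨hT'', ?_⟩
  refine aux_isSubobjectClassifier_of_iso hTG hT'' eTw eΩw ?_ hclsG
  ext g
  simpa [eTw, eΩw] using congr_app comm (F.obj g)
end

section
/- Let E be a category with a terminal object 1, pullbacks, and a subobject classifier ⊤ : 1 ⟶ Ω, and let C be any category. In the functor category C ⥤ E, a natural transformation m : Y ⟶ X arises as a pullback of the constant natural transformation Δ⊤ : Δ1 ⟶ ΔΩ along some morphism X ⟶ ΔΩ if and only if m is a componentwise monomorphism and a cartesian natural transformation; moreover, in that case the classifying morphism X ⟶ ΔΩ is unique. In other words, Δ⊤ : Δ1 ⟶ ΔΩ classifies exactly those monomorphisms of C ⥤ E that are cartesian natural transformations. -/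
open CategoryTheory Limits

/-- Componentwise pullback squares in a functor category assemble to a pullback square. -/
lemma isPullback_of_components {C : Type*} [Category C] {E : Type*} [Category E]
    {P Y Z W : C ⥤ E} (fst : P ⟶ Y) (snd : P ⟶ Z) (f : Y ⟶ W) (g : Z ⟶ W)
    (h : ∀ c : C, IsPullback (fst.app c) (snd.app c) (f.app c) (g.app c)) :
    IsPullback fst snd f g := by
  have w : fst ≫ f = snd ≫ g := by ext c; exact (h c).w
  exact IsPullback.of_isLimit (evaluationJointlyReflectsLimits
    (PullbackCone.mk fst snd w) fun c =>
      (isLimitMapConePullbackConeEquiv ((evaluation C E).obj c) w).symm (h c).isLimit)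

/-- Let `E` be a category with a terminal object, pullbacks and a subobject
classifier `t : T ⟶ Ω`, and let `C` be any category.  A natural transformation `m : Y ⟶ X` in
`C ⥤ E` arises as a pullback of the constant transformation `Δt : ΔT ⟶ ΔΩ` along some morphism
`X ⟶ ΔΩ` if and only if `m` is a componentwise monomorphism and a cartesian natural
transformation (all naturality squares of `m` are pullbacks); moreover the classifying
morphism is then unique. -/
theorem const_classifier_classifies_cartesian_monos
    {C : Type*} [Category C] {E : Type*} [Category E] [HasPullbacks E]
    {T Ω : E} (hT : IsTerminal T) (t : T ⟶ Ω)
    (ht : CategoryTheory.IsSubobjectClassifier hT t)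
    {X Y : C ⥤ E} (m : Y ⟶ X) :
    ((∃ (χ : X ⟶ (Functor.const C).obj Ω) (u : Y ⟶ (Functor.const C).obj T),
        IsPullback m u χ ((Functor.const C).map t)) ↔
      (∀ c : C, Mono (m.app c)) ∧
        ∀ {c c' : C} (f : c ⟶ c'),
          IsPullback (m.app c) (Y.map f) (X.map f) (m.app c')) ∧
      ∀ χ₁ χ₂ : X ⟶ (Functor.const C).obj Ω,
        (∃ u, IsPullback m u χ₁ ((Functor.const C).map t)) →
        (∃ u, IsPullback m u χ₂ ((Functor.const C).map t)) → χ₁ = χ₂ := by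
  have := ht.mono
  -- the component of a pullback square along `Δt` is a pullback square along `t`
  have comp : ∀ (χ : X ⟶ (Functor.const C).obj Ω) (u : Y ⟶ (Functor.const C).obj T),
      IsPullback m u χ ((Functor.const C).map t) → ∀ c : C,
      IsPullback (m.app c) (u.app c) (χ.app c) t := by
    intro χ u hpb c
    exact hpb.map ((evaluation C E).obj c)
  have monoApp : ∀ (χ : X ⟶ (Functor.const C).obj Ω) (u : Y ⟶ (Functor.const C).obj T),
      IsPullback m u χ ((Functor.const C).map t) → ∀ c : C, Mono (m.app c) := by
    intro χ u hpb c
    exact PullbackCone.mono_fst_of_is_pullback_of_mono (comp χ u hpb c).isLimit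
  constructor
  · constructor
    · rintro ⟨χ, u, hpb⟩
      refine ⟨monoApp χ u hpb, ?_⟩
      intro c c' f
      have pc := comp χ u hpb c
      have pc' := comp χ u hpb c'
      have unat : u.app c = Y.map f ≫ u.app c' := by
        have := u.naturality f
        simpa using this.symm
      have χnat : χ.app c = X.map f ≫ χ.app c' := by
        have := χ.naturality f
        simpa using this
      rw [unat, χnat] at pc
      exact IsPullback.of_bot pc (m.naturality f).symm pc'
    · rintro ⟨hmono, hcart⟩
      haveI := hmono
      -- choose the classifying morphism componentwise
      have hχ : ∀ c : C, IsPullback (m.app c) (hT.from (Y.obj c))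
          ((ht.classifies (m.app c)).exists.choose) t :=
        fun c => (ht.classifies (m.app c)).exists.choose_spec
      have hnat : ∀ {c c' : C} (f : c ⟶ c'),
          (ht.classifies (m.app c)).exists.choose =
            X.map f ≫ (ht.classifies (m.app c')).exists.choose := by
        intro c c' f
        have big : IsPullback (m.app c) (Y.map f ≫ hT.from (Y.obj c'))
            (X.map f ≫ (ht.classifies (m.app c')).exists.choose) t :=
          (hcart f).paste_vert (hχ c')
        have : Y.map f ≫ hT.from (Y.obj c') = hT.from (Y.obj c) := hT.hom_ext _ _
        rw [this] at big
        exact (ht.classifies (m.app c)).unique (hχ c) big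
      refine ⟨⟨fun c => (ht.classifies (m.app c)).exists.choose, ?_⟩,
        ⟨fun c => hT.from (Y.obj c), fun _ _ _ => hT.hom_ext _ _⟩, ?_⟩
      · intro c c' f
        simp [hnat f]
      · exact isPullback_of_components _ _ _ _ fun c => hχ c
  · rintro χ₁ χ₂ ⟨u₁, h₁⟩ ⟨u₂, h₂⟩
    ext c
    haveI := monoApp χ₁ u₁ h₁ c
    have p₁ := comp χ₁ u₁ h₁ c
    have p₂ := comp χ₂ u₂ h₂ c
    rw [hT.hom_ext (u₁.app c) (hT.from (Y.obj c))] at p₁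
    rw [hT.hom_ext (u₂.app c) (hT.from (Y.obj c))] at p₂
    exact ((ht.classifies (m.app c)).unique p₁ p₂)
end

section
/- Let E be a category with pullbacks, let C ⊣ P be an adjoint pair of endofunctors of E, let ε : C ⟶ 𝟭 be a natural transformation, and let ε' : 𝟭 ⟶ P be its conjugate (mate) under the adjunction C ⊣ P. For an object X of E, define C_X : E/X ⥤ E/X on the slice category by sending an object g : Y ⟶ X to the object ε_X ∘ C g : C Y ⟶ X, and define P_X : E/X ⥤ E/X by sending an object h : Z ⟶ X to the projection X ×_{P X} P Z ⟶ X of the pullback of P h : P Z ⟶ P X along ε'_X : X ⟶ P X. Then C_X is left adjoint to P_X. -/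
open CategoryTheory Limits

namespace Stmt7

variable {E : Type*} [Category E] [HasPullbacks E]

/-- The functor `C_X : E/X ⥤ E/X` induced on the slice over `X` by an endofunctor `C` with a
natural transformation `ε : C ⟶ 𝟭 E`: it sends `g : Y ⟶ X` to `ε_X ∘ C g : C Y ⟶ X`. -/
@[simps]
def sliceCylinder (C : E ⥤ E) (ε : C ⟶ 𝟭 E) (X : E) : Over X ⥤ Over X where
  obj g := Over.mk (C.map g.hom ≫ ε.app X)
  map {g g'} f := Over.homMk (C.map f.left) (by
    dsimp
    rw [← Category.assoc, ← C.map_comp, Over.w f])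
  map_id g := by
    ext
    simp
  map_comp f f' := by
    ext
    simp

/-- The functor `P_X : E/X ⥤ E/X` induced on the slice over `X` by an endofunctor `P` with a
natural transformation `ε' : 𝟭 E ⟶ P`: it sends `h : Z ⟶ X` to the projection
`X ×_{P X} P Z ⟶ X` of the pullback of `P h` along `ε'_X`. -/
@[simps]
noncomputable def sliceCocylinder (P : E ⥤ E) (ε' : 𝟭 E ⟶ P) (X : E) : Over X ⥤ Over X where
  obj h := Over.mk (pullback.fst (ε'.app X) (P.map h.hom))
  map {h h'} f := Over.homMk
    (pullback.map (ε'.app X) (P.map h.hom) (ε'.app X) (P.map h'.hom)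
      (𝟙 X) (P.map f.left) (𝟙 (P.obj X)) (by simp)
      (by rw [← P.map_comp, Over.w f, Category.comp_id]))
    (by exact (pullback.lift_fst _ _ _).trans (Category.comp_id _))
  map_id h := by
    apply Over.OverMorphism.ext
    apply pullback.hom_ext <;> simp
  map_comp f f' := by
    apply Over.OverMorphism.ext
    apply pullback.hom_ext <;> simp only [pullback.map, Category.assoc, pullback.lift_fst, pullback.lift_snd, pullback.lift_fst_assoc, pullback.lift_snd_assoc, Functor.map_comp, Over.comp_left, Over.homMk_left]
    exact congrArg (pullback.fst _ _ ≫ ·) (Category.id_comp (𝟙 X)).symm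

end Stmt7


section Aux
open CategoryTheory Limits
variable {E : Type*} [Category E] [HasPullbacks E]

omit [HasPullbacks E] in
private lemma conj_app (C P : E ⥤ E) (adj : C ⊣ P) (ε : C ⟶ 𝟭 E) (X : E) :
    (conjugateEquiv Adjunction.id adj ε).app X = adj.homEquiv X X (ε.app X) := by
  simp [conjugateEquiv, mateEquiv, Adjunction.id, Adjunction.homEquiv]

end Aux

/-- Let `E` be a category with pullbacks, `C ⊣ P` an adjoint pair of
endofunctors of `E`, `ε : C ⟶ 𝟭` a natural transformation and `ε' : 𝟭 ⟶ P` its conjugate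
(mate).  For any object `X`, the induced functor `C_X` on the slice `E/X` (sending
`g : Y ⟶ X` to `ε_X ∘ C g`) is left adjoint to the induced functor `P_X` (sending `h : Z ⟶ X`
to the pullback of `P h` along `ε'_X`). -/
theorem slice_cylinder_adjunction
    {E : Type*} [Category E] [HasPullbacks E]
    (C P : E ⥤ E) (adj : C ⊣ P) (ε : C ⟶ 𝟭 E) (X : E) :
    Nonempty
      (Stmt7.sliceCylinder C ε X ⊣
        Stmt7.sliceCocylinder P (conjugateEquiv Adjunction.id adj ε) X) := by
  set ε' := conjugateEquiv Adjunction.id adj ε with hε'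
  have key : ∀ Y : E, ε'.app Y = adj.homEquiv Y Y (ε.app Y) := fun Y => conj_app C P adj ε Y
  refine ⟨Adjunction.mkOfHomEquiv
    { homEquiv := fun g h =>
        { toFun := fun u => Over.homMk
            (pullback.lift g.hom (adj.homEquiv _ _ u.left) (by
              have hu : u.left ≫ h.hom = C.map g.hom ≫ ε.app X := Over.w u
              have := congrArg (adj.homEquiv _ _) hu
              erw [Adjunction.homEquiv_naturality_right,
                Adjunction.homEquiv_naturality_left] at this
              rw [key]
              exact this.symm)) (by exact pullback.lift_fst _ _ _)
          invFun := fun v => Over.homMk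
            ((adj.homEquiv _ _).symm (v.left ≫ pullback.snd _ _)) (by
              have hv : v.left ≫ pullback.fst (ε'.app X) (P.map h.hom) = g.hom := Over.w v
              dsimp
              erw [← Adjunction.homEquiv_naturality_right_symm, Category.assoc,
                ← pullback.condition, ← Category.assoc, hv, key,
                Adjunction.homEquiv_naturality_left_symm, Equiv.symm_apply_apply]
              rfl)
          left_inv := fun u => by
            apply Over.OverMorphism.ext
            exact (congrArg (adj.homEquiv _ _).symm (pullback.lift_snd _ _ _)).trans
              (Equiv.symm_apply_apply _ _)
          right_inv := fun v => by
            apply Over.OverMorphism.ext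
            apply pullback.hom_ext
            · exact (pullback.lift_fst _ _ _).trans (Over.w v).symm
            · exact (pullback.lift_snd _ _ _).trans (Equiv.apply_symm_apply _ _) }
      homEquiv_naturality_left_symm := fun f u => by
        apply Over.OverMorphism.ext
        dsimp
        exact (congrArg (adj.homEquiv _ _).symm (Category.assoc _ _ _)).trans
          (Adjunction.homEquiv_naturality_left_symm _ _ _)
      homEquiv_naturality_right := fun u k => by
        apply Over.OverMorphism.ext
        simp only [Equiv.coe_fn_mk]
        apply pullback.hom_ext
        · exact (Over.w _).trans (Over.w _).symm
        · refine (pullback.lift_snd _ _ _).trans ?_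
          refine (adj.homEquiv_naturality_right _ _).trans ?_
          refine Eq.trans ?_ (Category.assoc _ _ _).symm
          exact (congrArg (· ≫ P.map k.left) (pullback.lift_snd _ _ _).symm).trans
            ((Category.assoc _ _ _).trans (congrArg (_ ≫ ·) (pullback.lift_snd _ _ _).symm)) }⟩
end

section
/- Let C be a small category with binary products. Then for every object c of C, the representable presheaf y(c) is tiny in the category of presheaves on C: the exponential functor X ↦ X^{y(c)} on Cᵒᵖ ⥤ Type admits a right adjoint. Indeed X^{y(c)} is naturally isomorphic to the restriction of X along the functor c × (−), so the right adjoint is given by right Kan extension along that functor. -/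
open CategoryTheory Limits

/-- An object `A` of a category with binary products is *tiny* if the exponential functor
`X ↦ X^A`, i.e. the right adjoint of the product functor `(−) × A`, itself admits a right
adjoint (equivalently, is a left adjoint). -/
def CategoryTheory.IsTiny {C : Type*} [Category C] [HasBinaryProducts C] (A : C) : Prop :=
  ∃ expA : C ⥤ C, Nonempty (prod.functor.obj A ⊣ expA) ∧ expA.IsLeftAdjoint

/-- In a category whose monoidal structure comes from chosen finite products, tensoring on
the left with `A` is naturally isomorphic to the categorical product functor `A ⨯ -`. -/
noncomputable def tensorLeftIsoProdFunctor {D : Type*} [Category.{v} D] [CartesianMonoidalCategory D]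
    [HasBinaryProducts D] (A : D) :
    MonoidalCategory.tensorLeft A ≅ prod.functor.obj A :=
  NatIso.ofComponents
    (fun X =>
      { hom := prod.lift (CartesianMonoidalCategory.fst A X) (CartesianMonoidalCategory.snd A X)
        inv := CartesianMonoidalCategory.lift prod.fst prod.snd
        hom_inv_id := by
          apply CartesianMonoidalCategory.hom_ext
          · erw [Category.assoc, CartesianMonoidalCategory.lift_fst, prod.lift_fst, Category.id_comp]
          · erw [Category.assoc, CartesianMonoidalCategory.lift_snd, prod.lift_snd, Category.id_comp]
        inv_hom_id := by
          apply Limits.prod.hom_ext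
          · erw [Category.assoc, prod.lift_fst, CartesianMonoidalCategory.lift_fst, Category.id_comp]
          · erw [Category.assoc, prod.lift_snd, CartesianMonoidalCategory.lift_snd, Category.id_comp] })
    (fun f => by
      apply Limits.prod.hom_ext
      · erw [Category.assoc, prod.lift_fst, Category.assoc, prod.map_fst, Category.comp_id,
          prod.lift_fst, CartesianMonoidalCategory.whiskerLeft_fst]
      · erw [Category.assoc, prod.lift_snd, Category.assoc, prod.map_snd, prod.lift_snd_assoc,
          CartesianMonoidalCategory.whiskerLeft_snd])

/-- Let `C` be a small category with binary products.  Then every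
representable presheaf `y(c)` is tiny in `Cᵒᵖ ⥤ Type`: the exponential functor
`X ↦ X^{y(c)}` admits a right adjoint.  Indeed, `X^{y(c)}` is naturally isomorphic to the
restriction of `X` along the functor `c × (−)`. -/
theorem representable_presheaf_tiny
    {C : Type u} [SmallCategory C] [HasBinaryProducts C] (c : C) :
    CategoryTheory.IsTiny (yoneda.obj c) ∧
      Nonempty
        (ihom (yoneda.obj c) ≅
          (Functor.whiskeringLeft Cᵒᵖ Cᵒᵖ (Type u)).obj (prod.functor.obj c).op) := by
  classical
  set F : C ⥤ C := prod.functor.obj c with hF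
  set P : (Cᵒᵖ ⥤ Type u) ⥤ (Cᵒᵖ ⥤ Type u) := prod.functor.obj (yoneda.obj c) with hP
  set W : (Cᵒᵖ ⥤ Type u) ⥤ (Cᵒᵖ ⥤ Type u) :=
    (Functor.whiskeringLeft Cᵒᵖ Cᵒᵖ (Type u)).obj F.op with hW
  -- `P` preserves colimits since it is a left adjoint (cartesian closedness)
  have hPadj : P ⊣ ihom (yoneda.obj c) :=
    (ihom.adjunction (yoneda.obj c)).ofNatIsoLeft (tensorLeftIsoProdFunctor (yoneda.obj c))
  haveI : P.IsLeftAdjoint := ⟨_, ⟨hPadj⟩⟩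
  haveI : PreservesColimitsOfSize.{u, u} P := hPadj.leftAdjoint_preservesColimits
  -- the natural isomorphism `F ⋙ yoneda ≅ yoneda ⋙ P` (yoneda preserves products)
  let e₂ : F ⋙ yoneda ≅ yoneda ⋙ P := prodComparisonNatIso yoneda c
  -- `F.op.lan` and `P` are both left Kan extensions of `F ⋙ yoneda` along yoneda
  let e₁ : F ⋙ uliftYoneda.{u} ≅ uliftYoneda.{u} ⋙ F.op.lan := Presheaf.compULiftYonedaIsoULiftYonedaCompLan.{u} F
  let e₂' : F ⋙ uliftYoneda.{u} ≅ uliftYoneda.{u} ⋙ P := Functor.isoWhiskerLeft F uliftYonedaIsoYoneda.{u} ≪≫ e₂ ≪≫ Functor.isoWhiskerRight uliftYonedaIsoYoneda.{u}.symm P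
  haveI := Presheaf.isLeftKanExtension_of_preservesColimits.{u, u, u, u, u+1} P e₂'
  haveI : F.op.lan.IsLeftKanExtension e₁.hom := by
    haveI : PreservesColimitsOfSize.{u, u} F.op.lan :=
      (F.op.lanAdjunction (Type u)).leftAdjoint_preservesColimits
    exact Presheaf.isLeftKanExtension_of_preservesColimits.{u, u, u, u, u+1} _ e₁
  let eLP : F.op.lan ≅ P := Functor.leftKanExtensionUnique _ e₁.hom _ e₂'.hom
  -- transfer the adjunction `F.op.lan ⊣ W` across this iso
  have adjPW : P ⊣ W := (F.op.lanAdjunction (Type u)).ofNatIsoLeft eLP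
  -- the desired isomorphism, by uniqueness of right adjoints
  let eExpW : ihom (yoneda.obj c) ≅ W := hPadj.rightAdjointUniq adjPW
  refine ⟨⟨ihom (yoneda.obj c), ⟨hPadj⟩, ?_⟩, ⟨eExpW⟩⟩
  exact ⟨F.op.ran, ⟨(F.op.ranAdjunction (Type u)).ofNatIsoLeft eExpW.symm⟩⟩
end

section
/- Let E be a category with binary products and pullbacks, let P be an endofunctor of E equipped with natural transformations ε : 𝟭 ⟶ P and δ : P ⟶ 𝟭 satisfying δ ∘ ε = id, and let (s, t : R ⟶ X, r : X ⟶ R) be a reflexive relation on an object X. If the canonical map ⟨⟨P s, P t⟩, δ_R⟩ : P R ⟶ (P X × P X) ×_{X × X} R into the pullback of ⟨s, t⟩ : R ⟶ X × X along δ_X × δ_X : P X × P X ⟶ X × X admits a section, then the reflexive relation R admits a δ-contractor. -/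
open CategoryTheory Limits

/-- Let `E` have binary products and pullbacks, let `P` be an endofunctor
with `ε : 𝟭 ⟶ P`, `δ : P ⟶ 𝟭` satisfying `δ ∘ ε = id`, and let `(s, t : R ⟶ X, r)` be a
reflexive relation on `X`.  If the canonical map `⟨⟨P s, P t⟩, δ_R⟩` from `P R` into the
pullback of `⟨s, t⟩ : R ⟶ X × X` along `δ_X × δ_X` admits a section, then `R` admits a
`δ`-contractor: a morphism `c : P X ⟶ P R` with `P s ∘ c = id`, `P t ∘ c = ε_X ∘ δ_X` and
`δ_R ∘ c = r ∘ δ_X`. -/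
theorem delta_contractor_of_section
    {E : Type*} [Category E] [HasBinaryProducts E] [HasPullbacks E]
    (P : E ⥤ E) (ε : 𝟭 E ⟶ P) (δ : P ⟶ 𝟭 E) (hεδ : ε ≫ δ = 𝟙 (𝟭 E))
    {R X : E} (s t : R ⟶ X) (r : X ⟶ R)
    (hs : r ≫ s = 𝟙 X) (ht : r ≫ t = 𝟙 X)
    (hsec : ∃ σ : pullback (prod.map (δ.app X) (δ.app X)) (prod.lift s t) ⟶ P.obj R,
      σ ≫ (pullback.lift (prod.lift (P.map s) (P.map t)) (δ.app R)
        (by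
          apply Limits.prod.hom_ext <;>
            simp [NatTrans.naturality]) :
        P.obj R ⟶ pullback (prod.map (δ.app X) (δ.app X)) (prod.lift s t)) = 𝟙 _) :
    ∃ c : P.obj X ⟶ P.obj R,
      c ≫ P.map s = 𝟙 (P.obj X) ∧
      c ≫ P.map t = δ.app X ≫ ε.app X ∧
      c ≫ δ.app R = δ.app X ≫ r := by

  obtain ⟨σ, hσ⟩ := hsec
  have hεδX : ε.app X ≫ δ.app X = 𝟙 X := congrArg (fun n => n.app X) hεδ
  set L : P.obj R ⟶ pullback (prod.map (δ.app X) (δ.app X)) (prod.lift s t) :=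
    pullback.lift (prod.lift (P.map s) (P.map t)) (δ.app R)
      (by apply Limits.prod.hom_ext <;> simp [NatTrans.naturality]) with hL
  have hσs : σ ≫ P.map s = pullback.fst _ _ ≫ prod.fst := by
    have := congrArg (fun f => f ≫ pullback.fst (prod.map (δ.app X) (δ.app X)) (prod.lift s t) ≫ prod.fst) hσ
    simp only [Category.assoc] at this
    rw [pullback.lift_fst_assoc, prod.lift_fst] at this
    simpa [hL] using this
  have hσt : σ ≫ P.map t = pullback.fst _ _ ≫ prod.snd := by
    have := congrArg (fun f => f ≫ pullback.fst (prod.map (δ.app X) (δ.app X)) (prod.lift s t) ≫ prod.snd) hσ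
    simp only [Category.assoc] at this
    rw [pullback.lift_fst_assoc, prod.lift_snd] at this
    simpa [hL] using this
  have hσδ : σ ≫ δ.app R = pullback.snd _ _ := by
    have := congrArg (fun f => f ≫ pullback.snd (prod.map (δ.app X) (δ.app X)) (prod.lift s t)) hσ
    simp only [Category.assoc] at this
    rw [pullback.lift_snd] at this
    simpa [hL] using this
  refine ⟨pullback.lift (prod.lift (𝟙 (P.obj X)) (δ.app X ≫ ε.app X)) (δ.app X ≫ r)
      (by apply Limits.prod.hom_ext <;>
        simp [hεδX, hs, ht]) ≫ σ, ?_, ?_, ?_⟩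
  · rw [Category.assoc, hσs, pullback.lift_fst_assoc, prod.lift_fst]
  · rw [Category.assoc, hσt, pullback.lift_fst_assoc, prod.lift_snd]
  · rw [Category.assoc, hσδ, pullback.lift_snd]
end

section
/- Let E be a category with pullbacks, let P be an endofunctor of E equipped with natural transformations ε : 𝟭 ⟶ P and δ : P ⟶ 𝟭 satisfying δ ∘ ε = id, and let (s, t : R ⟶ X, r : X ⟶ R) be a reflexive relation on X admitting a δ-contractor. Form the pullback P X ×_X R of δ_X : P X ⟶ X along t : R ⟶ X. Then the morphism δ_X : P X ⟶ X is a retract, in the arrow category of E, of the canonical morphism ⟨P t, δ_R⟩ : P R ⟶ P X ×_X R. In particular, the square from ⟨P t, δ_R⟩ to δ_X with components P s : P R ⟶ P X and s ∘ pr_R : P X ×_X R ⟶ X is a split epimorphism in the arrow category. -/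
open CategoryTheory Limits

/-- Let `E` have pullbacks, let `P` be an endofunctor with `ε : 𝟭 ⟶ P`,
`δ : P ⟶ 𝟭` satisfying `δ ∘ ε = id`, and let `(s, t : R ⟶ X, r)` be a reflexive relation on
`X` admitting a `δ`-contractor `c`.  Form the pullback `P X ×_X R` of `δ_X` along `t`.  Then
`δ_X : P X ⟶ X` is a retract, in the arrow category of `E`, of the canonical morphism
`⟨P t, δ_R⟩ : P R ⟶ P X ×_X R`; in particular the square from `⟨P t, δ_R⟩` to `δ_X` with
components `P s` and `s ∘ pr_R` is a split epimorphism in the arrow category. -/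
theorem delta_contractor_retract
    {E : Type*} [Category E] [HasPullbacks E]
    (P : E ⥤ E) (ε : 𝟭 E ⟶ P) (δ : P ⟶ 𝟭 E) (hεδ : ε ≫ δ = 𝟙 (𝟭 E))
    {R X : E} (s t : R ⟶ X) (r : X ⟶ R)
    (hs : r ≫ s = 𝟙 X) (ht : r ≫ t = 𝟙 X)
    (c : P.obj X ⟶ P.obj R)
    (hc₁ : c ≫ P.map s = 𝟙 (P.obj X))
    (hc₂ : c ≫ P.map t = δ.app X ≫ ε.app X)
    (hc₃ : c ≫ δ.app R = δ.app X ≫ r) :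
    (∃ (i : Arrow.mk (δ.app X) ⟶
          Arrow.mk (pullback.lift (P.map t) (δ.app R) (by simp) :
            P.obj R ⟶ pullback (δ.app X) t))
        (p : Arrow.mk (pullback.lift (P.map t) (δ.app R) (by simp) :
            P.obj R ⟶ pullback (δ.app X) t) ⟶ Arrow.mk (δ.app X)),
        i ≫ p = 𝟙 (Arrow.mk (δ.app X))) ∧
      IsSplitEpi
        (Arrow.homMk
          (u := P.map s) (v := pullback.snd (δ.app X) t ≫ s)
          (by simp; erw [pullback.lift_snd_assoc]) :
          Arrow.mk (pullback.lift (P.map t) (δ.app R) (by simp) :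
            P.obj R ⟶ pullback (δ.app X) t) ⟶ Arrow.mk (δ.app X)) := by
  have hεX : ε.app X ≫ δ.app X = 𝟙 X := congrArg (fun f => f.app X) hεδ
  let i : Arrow.mk (δ.app X) ⟶
      Arrow.mk (pullback.lift (P.map t) (δ.app R) (by simp) :
        P.obj R ⟶ pullback (δ.app X) t) :=
    Arrow.homMk (u := c)
      (v := pullback.lift (ε.app X) r (by rw [hεX, ht]))
      (by
        apply pullback.hom_ext
        · simp [hc₂]; erw [pullback.lift_fst, pullback.lift_fst, hc₂]
        · simp [hc₃]; erw [pullback.lift_snd, pullback.lift_snd, hc₃])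
  let p : Arrow.mk (pullback.lift (P.map t) (δ.app R) (by simp) :
        P.obj R ⟶ pullback (δ.app X) t) ⟶ Arrow.mk (δ.app X) :=
    Arrow.homMk (u := P.map s) (v := pullback.snd (δ.app X) t ≫ s) (by simp; erw [pullback.lift_snd_assoc])
  have hip : i ≫ p = 𝟙 (Arrow.mk (δ.app X)) := by
    ext
    · simp [i, p, hc₁]
    · simp [i, p, hs]; erw [pullback.lift_snd_assoc, hs]
  exact ⟨⟨i, p, hip⟩, ⟨⟨i, hip⟩⟩⟩
end

section
/- Let k : C ⥤ D be a functor between small categories, and let ι_C : C ⥤ 1 ⋆ C and ι_D : D ⥤ 1 ⋆ D denote the inclusions into the joins with the terminal category. Then the Beck–Chevalley natural transformation k_! ∘ ι_C* ⟶ ι_D* ∘ (1 ⋆ k)_! between functors from presheaves on 1 ⋆ C to presheaves on D is an isomorphism, where for a functor u, u_! denotes left Kan extension of presheaves along u and u* denotes restriction of presheaves along u. -/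
open CategoryTheory

universe u

open CategoryTheory.Limits CategoryTheory.Functor

namespace BCAux

variable {C D : Type u} [SmallCategory C] [SmallCategory D] (k : C ⥤ D)

open WithInitial

/-- The comparison functor on comma categories. -/
def commaFunctor (X : Dᵒᵖ) :
    CostructuredArrow k.op X ⥤
      CostructuredArrow (WithInitial.map k).op ((incl (C := D)).op.obj X) where
  obj g := CostructuredArrow.mk (Y := (incl (C := C)).op.obj g.left)
    ((incl (C := D)).op.map g.hom)
  map {g g'} φ := CostructuredArrow.homMk ((incl (C := C)).op.map φ.left)
    (by exact (by rw [← Functor.map_comp, CostructuredArrow.w φ] :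
      (incl (C := D)).op.map (k.op.map φ.left) ≫ (incl (C := D)).op.map g'.hom
        = (incl (C := D)).op.map g.hom))
  map_id g := by apply CostructuredArrow.hom_ext; exact (incl (C := C)).op.map_id g.left
  map_comp φ ψ := by apply CostructuredArrow.hom_ext; exact (incl (C := C)).op.map_comp _ _

@[simp] lemma commaFunctor_map_left (X : Dᵒᵖ) {g g' : CostructuredArrow k.op X} (φ : g ⟶ g') :
    ((commaFunctor k X).map φ).left = (incl (C := C)).op.map φ.left := rfl

instance (X : Dᵒᵖ) : (commaFunctor k X).Faithful where
  map_injective {g g'} {φ ψ} h := by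
    apply CostructuredArrow.hom_ext
    have := congrArg CommaMorphism.left h
    simp only [commaFunctor_map_left] at this
    exact (incl (C := C)).op.map_injective this

instance (X : Dᵒᵖ) : (commaFunctor k X).Full where
  map_surjective {g g'} ξ := by
    refine ⟨CostructuredArrow.homMk ((down ξ.left.unop).op) ?_, ?_⟩
    · apply (incl (C := D)).op.map_injective
      rw [Functor.map_comp]
      exact CostructuredArrow.w ξ
    · apply CostructuredArrow.hom_ext
      rfl

instance (X : Dᵒᵖ) : (commaFunctor k X).EssSurj where
  mem_essImage g := by
    obtain ⟨⟨l⟩, ⟨⟨⟩⟩, f⟩ := g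
    cases l with
    | star => exact (WithInitial.false_of_to_star f.unop).elim
    | of c => exact ⟨CostructuredArrow.mk ((down f.unop).op), ⟨Iso.refl _⟩⟩

instance (X : Dᵒᵖ) : (commaFunctor k X).IsEquivalence := {}

end BCAux

/-- Let `k : C ⥤ D` be a functor between small categories and let
`ι_C : C ⥤ 1 ⋆ C`, `ι_D : D ⥤ 1 ⋆ D` be the inclusions into the joins with the terminal
category (realized as `WithInitial C`, `WithInitial D`).  Then the Beck–Chevalley natural
transformation `k_! ∘ ι_C* ⟶ ι_D* ∘ (1 ⋆ k)_!` — the mate, under the Kan extension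
adjunctions `u_! ⊣ u*`, of the canonical identification `(1 ⋆ k)* ∘ ι_C* = ι_D* ∘ k*` — is an
isomorphism of functors from presheaves on `1 ⋆ C` to presheaves on `D`. -/
theorem beckChevalley_withInitial_isIso
    {C D : Type u} [SmallCategory C] [SmallCategory D] (k : C ⥤ D) :
    IsIso
      ((mateEquiv
          (G := (Functor.whiskeringLeft Cᵒᵖ (WithInitial C)ᵒᵖ (Type u)).obj
            (WithInitial.incl (C := C)).op)
          (H := (Functor.whiskeringLeft Dᵒᵖ (WithInitial D)ᵒᵖ (Type u)).obj
            (WithInitial.incl (C := D)).op)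
          ((WithInitial.map k).op.lanAdjunction (Type u))
          (k.op.lanAdjunction (Type u))).symm
        (TwoSquare.mk _ _ _ _ <| 𝟙 ((Functor.whiskeringLeft (WithInitial C)ᵒᵖ (WithInitial D)ᵒᵖ (Type u)).obj
              (WithInitial.map k).op ⋙
            (Functor.whiskeringLeft Cᵒᵖ (WithInitial C)ᵒᵖ (Type u)).obj
              (WithInitial.incl (C := C)).op))) := by
  set adj₁ := (WithInitial.map k).op.lanAdjunction (Type u) with hadj₁
  set adj₂ := k.op.lanAdjunction (Type u) with hadj₂
  set τ := (mateEquiv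
          (G := (whiskeringLeft Cᵒᵖ (WithInitial C)ᵒᵖ (Type u)).obj
            (WithInitial.incl (C := C)).op)
          (H := (whiskeringLeft Dᵒᵖ (WithInitial D)ᵒᵖ (Type u)).obj
            (WithInitial.incl (C := D)).op)
          adj₁ adj₂).symm
        (𝟙 ((whiskeringLeft (WithInitial C)ᵒᵖ (WithInitial D)ᵒᵖ (Type u)).obj
              (WithInitial.map k).op ⋙
            (whiskeringLeft Cᵒᵖ (WithInitial C)ᵒᵖ (Type u)).obj
              (WithInitial.incl (C := C)).op)) with hτ
  have hmate : mateEquiv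
      (G := (whiskeringLeft Cᵒᵖ (WithInitial C)ᵒᵖ (Type u)).obj
        (WithInitial.incl (C := C)).op)
      (H := (whiskeringLeft Dᵒᵖ (WithInitial D)ᵒᵖ (Type u)).obj
        (WithInitial.incl (C := D)).op) adj₁ adj₂ τ = 𝟙 _ := by
    rw [hτ]; exact Equiv.apply_symm_apply _ _
  suffices h : ∀ (P : (WithInitial C)ᵒᵖ ⥤ Type u) (X : Dᵒᵖ), IsIso ((τ.app P).app X) by
    haveI := h
    haveI : ∀ P, IsIso (τ.app P) := fun P => NatIso.isIso_of_isIso_app _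
    exact NatIso.isIso_of_isIso_app _
  intro P X
  have h1 := unit_mateEquiv adj₁ adj₂ τ P
  rw [hmate] at h1
  -- colimit cocones
  have t₁ : IsColimit ((LeftExtension.mk _
      (k.op.lanUnit.app ((WithInitial.incl (C := C)).op ⋙ P))).coconeAt X) :=
    Functor.isPointwiseLeftKanExtensionLeftKanExtensionUnit k.op _ X
  let c₂ : Cocone (CostructuredArrow.proj k.op X ⋙ ((WithInitial.incl (C := C)).op ⋙ P)) :=
    ((LeftExtension.mk _ ((WithInitial.map k).op.lanUnit.app P)).coconeAt
        ((WithInitial.incl (C := D)).op.obj X)).whisker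
      (BCAux.commaFunctor k X).asEquivalence.functor
  have t₂ : IsColimit c₂ :=
    (Functor.isPointwiseLeftKanExtensionLeftKanExtensionUnit (WithInitial.map k).op P
      ((WithInitial.incl (C := D)).op.obj X)).whiskerEquivalence
      (BCAux.commaFunctor k X).asEquivalence
  have key : ∀ g : CostructuredArrow k.op X,
      ((LeftExtension.mk _
        (k.op.lanUnit.app ((WithInitial.incl (C := C)).op ⋙ P))).coconeAt X).ι.app g ≫
          (τ.app P).app X = c₂.ι.app g := by
    intro g
    have hnat := (τ.app P).naturality g.hom
    have h2 := NatTrans.congr_app h1 g.left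
    simp only [NatTrans.comp_app, NatTrans.id_app, Category.comp_id, comp_obj,
      whiskeringLeft_obj_obj, whiskeringLeft_obj_map, whiskerLeft_app, id_obj] at h2
    rw [hadj₁, hadj₂] at h2
    simp only [Functor.lanAdjunction_unit] at h2
    have hnat' : (k.op.lan.obj ((WithInitial.incl (C := C)).op ⋙ P)).map g.hom ≫
        (τ.app P).app X = (τ.app P).app (k.op.obj g.left) ≫
          ((WithInitial.map k).op.lan.obj P).map ((WithInitial.incl (C := D)).op.map g.hom) :=
      (τ.app P).naturality g.hom
    show ((k.op.lanUnit.app ((WithInitial.incl (C := C)).op ⋙ P)).app g.left ≫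
        (k.op.lan.obj ((WithInitial.incl (C := C)).op ⋙ P)).map g.hom) ≫ (τ.app P).app X =
      ((WithInitial.map k).op.lanUnit.app P).app ((WithInitial.incl (C := C)).op.obj g.left) ≫
        ((WithInitial.map k).op.lan.obj P).map ((WithInitial.incl (C := D)).op.map g.hom)
    rw [Category.assoc, hnat', ← Category.assoc, ← h2]
    rfl
  have he : (τ.app P).app X = (t₁.coconePointUniqueUpToIso t₂).hom :=
    t₁.hom_ext fun g => by rw [key g]; exact (t₁.comp_coconePointUniqueUpToIso_hom t₂ g).symm
  rw [he]
  exact Iso.isIso_hom _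
end
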